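/- Let G be a finite group, P a projective resolution of the trivial Z[G]-module Z with differentials d_n, and n ≥ 1. Define Φ from the group of Z[G]-homomorphisms f : Z → ker(d_n : P_n → P_{n-1}) ∩ (G-invariants regarded inside P_n) to the homology H_n(G,Z) of P ⊗_{Z[G]} Z, by sending f to the class of y ⊗ 1 where f(1) = N·y. Then Φ is a well-defined surjective group homomorphism whose kernel consists exactly of those f that factor through a projective Z[G]-module; hence Φ induces an isomorphism Hom-bar_{Z[G]}(Z, Ω^{n+1}Z) ≅ H_n(G,Z). -/

import Mathlib

variable (G : Type) [Group G]

/-- The augmentation ring homomorphism `ℤ[G] → ℤ`. -/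
noncomputable def augmentation : MonoidAlgebra ℤ G →+* ℤ :=
  ((MonoidAlgebra.lift ℤ ℤ G) 1).toRingHom

/-- `ℤ` as the trivial `ℤ[G]`-module. -/
noncomputable instance trivialZModule : Module (MonoidAlgebra ℤ G) ℤ :=
  Module.compHom ℤ (augmentation G)

/-- A `ℤ[G]`-linear map factors through a projective `ℤ[G]`-module. -/
def FactorsThroughProjective {M N : Type}
    [AddCommGroup M] [Module (MonoidAlgebra ℤ G) M]
    [AddCommGroup N] [Module (MonoidAlgebra ℤ G) N]
    (f : M →ₗ[MonoidAlgebra ℤ G] N) : Prop :=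
  ∃ (P : Type) (_ : AddCommGroup P) (_ : Module (MonoidAlgebra ℤ G) P),
    Module.Projective (MonoidAlgebra ℤ G) P ∧
    ∃ (f₁ : M →ₗ[MonoidAlgebra ℤ G] P) (f₂ : P →ₗ[MonoidAlgebra ℤ G] N), f = f₂.comp f₁

/-- The augmentation subgroup of a `ℤ[G]`-module; the quotient by it is the group of
coinvariants `M ⊗_{ℤ[G]} ℤ`. -/
def augSubgroup (M : Type) [AddCommGroup M] [Module (MonoidAlgebra ℤ G) M] :
    AddSubgroup M :=
  AddSubgroup.closure {z | ∃ (g : G) (x : M), z = (MonoidAlgebra.of ℤ G g) • x - x}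

/-- The subgroup of `G`-invariant elements. -/
def invSubgroup (M : Type) [AddCommGroup M] [Module (MonoidAlgebra ℤ G) M] :
    AddSubgroup M where
  carrier := {x | ∀ g : G, (MonoidAlgebra.of ℤ G g) • x = x}
  zero_mem' := fun g => smul_zero _
  add_mem' := fun {a b} ha hb g => by rw [smul_add, ha g, hb g]
  neg_mem' := fun {a} ha g => by rw [smul_neg, ha g]

attribute [-instance] MonoidAlgebra.instModule

section Aux

lemma aug_of (g : G) : augmentation G (MonoidAlgebra.of ℤ G g) = 1 := by
  simp [augmentation]

lemma aug_single (g : G) (c : ℤ) :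
    augmentation G (MonoidAlgebra.single g c : MonoidAlgebra ℤ G) = c := by
  have : (MonoidAlgebra.single g c : MonoidAlgebra ℤ G) = MonoidAlgebra.single g c := rfl
  rw [this]
  simp [augmentation, MonoidAlgebra.lift_single]

lemma triv_smul (r : MonoidAlgebra ℤ G) (k : ℤ) : r • k = augmentation G r * k := rfl

lemma single_eq_zsmul_of (g : G) (c : ℤ) :
    (MonoidAlgebra.single g c : MonoidAlgebra ℤ G) = c • MonoidAlgebra.of ℤ G g := by
  rw [MonoidAlgebra.of_apply]
  ext a
  simp [Finsupp.single_apply, MonoidAlgebra.coeff_single]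

variable [Fintype G]

noncomputable def Nrm : MonoidAlgebra ℤ G := ∑ g : G, MonoidAlgebra.of ℤ G g

lemma Nrm_apply (a : G) : (Nrm G).coeff a = 1 := by
  classical
  simp only [Nrm, MonoidAlgebra.of_apply]
  rw [MonoidAlgebra.coeff_sum, Finset.sum_apply']
  simp [MonoidAlgebra.coeff_single, Finsupp.single_apply]

lemma of_mul_Nrm (g : G) : MonoidAlgebra.of ℤ G g * Nrm G = Nrm G := by
  ext a
  rw [MonoidAlgebra.of_apply, MonoidAlgebra.coeff_single_mul_apply]
  simp [Nrm_apply]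

lemma Nrm_mul_of (g : G) : Nrm G * MonoidAlgebra.of ℤ G g = Nrm G := by
  ext a
  rw [MonoidAlgebra.of_apply, MonoidAlgebra.coeff_mul_single_apply]
  simp [Nrm_apply]

lemma Nrm_mul (r : MonoidAlgebra ℤ G) : Nrm G * r = (augmentation G r) • Nrm G := by
  induction r using MonoidAlgebra.induction_linear with
  | zero => simp
  | add f g hf hg => rw [mul_add, hf, hg, map_add, add_smul]
  | single g c =>
      rw [single_eq_zsmul_of, mul_smul_comm, Nrm_mul_of, map_zsmul, aug_of, smul_assoc, one_smul]

lemma mul_Nrm (r : MonoidAlgebra ℤ G) : r * Nrm G = (augmentation G r) • Nrm G := by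
  induction r using MonoidAlgebra.induction_linear with
  | zero => simp
  | add f g hf hg => rw [add_mul, hf, hg, map_add, add_smul]
  | single g c =>
      rw [single_eq_zsmul_of, smul_mul_assoc, of_mul_Nrm, map_zsmul, aug_of, smul_assoc, one_smul]

lemma aug_eq_zero_of_Nrm_mul (r : MonoidAlgebra ℤ G) (h : Nrm G * r = 0) :
    augmentation G r = 0 := by
  rw [Nrm_mul] at h
  have := Finsupp.ext_iff.mp (MonoidAlgebra.ext_iff.mp h) (1 : G)
  rw [MonoidAlgebra.coeff_smul, Finsupp.smul_apply, Nrm_apply] at this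
  simpa using this

lemma eq_smul_Nrm_of_invariant (r : MonoidAlgebra ℤ G)
    (h : ∀ g : G, MonoidAlgebra.of ℤ G g * r = r) : r = (r.coeff 1) • Nrm G := by
  ext a
  have h1 := Finsupp.ext_iff.mp (MonoidAlgebra.ext_iff.mp (h a)) a
  rw [MonoidAlgebra.of_apply, MonoidAlgebra.coeff_single_mul_apply, inv_mul_cancel, one_mul] at h1
  rw [MonoidAlgebra.coeff_smul, Finsupp.smul_apply, Nrm_apply, smul_eq_mul, mul_one, ← h1]

end Aux

section ModAux

variable {M M' : Type} [AddCommGroup M] [Module (MonoidAlgebra ℤ G) M]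
  [AddCommGroup M'] [Module (MonoidAlgebra ℤ G) M']

lemma smul_sub_aug (r : MonoidAlgebra ℤ G) (x : M) :
    r • x - (augmentation G r) • x ∈ augSubgroup G M := by
  induction r using MonoidAlgebra.induction_on with
  | of g =>
      rw [aug_of, one_smul]
      exact AddSubgroup.subset_closure ⟨g, x, rfl⟩
  | add f g hf hg =>
      have : (f + g) • x - (augmentation G (f + g)) • x =
          (f • x - (augmentation G f) • x) + (g • x - (augmentation G g) • x) := by
        rw [add_smul, map_add, add_smul]; abel
      rw [this]; exact add_mem hf hg
  | smul c f hf =>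
      have : (c • f) • x - (augmentation G (c • f)) • x
          = c • (f • x - (augmentation G f) • x) := by
        rw [map_zsmul, smul_assoc, smul_sub, smul_assoc]
      rw [this]
      exact AddSubgroup.zsmul_mem _ hf c

lemma smul_mem_aug {r : MonoidAlgebra ℤ G} (h : augmentation G r = 0) (x : M) :
    r • x ∈ augSubgroup G M := by
  have := smul_sub_aug G r x
  rwa [h, zero_smul, sub_zero] at this

lemma map_aug (f : M →ₗ[MonoidAlgebra ℤ G] M') {x : M} (hx : x ∈ augSubgroup G M) :
    f x ∈ augSubgroup G M' := by
  induction hx using AddSubgroup.closure_induction with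
  | mem z hz =>
      obtain ⟨g, w, rfl⟩ := hz
      rw [map_sub, map_smul]
      exact AddSubgroup.subset_closure ⟨g, f w, rfl⟩
  | zero => simpa using zero_mem _
  | add a b _ _ ha hb => rw [map_add]; exact add_mem ha hb
  | neg a _ ha => rw [map_neg]; exact neg_mem ha

variable [Fintype G]

lemma Nrm_smul_aug {x : M} (hx : x ∈ augSubgroup G M) : Nrm G • x = 0 := by
  induction hx using AddSubgroup.closure_induction with
  | mem z hz =>
      obtain ⟨g, w, rfl⟩ := hz
      rw [smul_sub, ← mul_smul, Nrm_mul_of, sub_self]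
  | zero => simp
  | add a b _ _ ha hb => rw [smul_add, ha, hb, add_zero]
  | neg a _ ha => rw [smul_neg, ha, neg_zero]

lemma of_smul_Nrm_smul (g : G) (x : M) :
    MonoidAlgebra.of ℤ G g • (Nrm G • x) = Nrm G • x := by
  rw [← mul_smul, of_mul_Nrm]

lemma exists_Nrm_smul (hM : Module.Projective (MonoidAlgebra ℤ G) M)
    (x : M) (hx : ∀ g : G, MonoidAlgebra.of ℤ G g • x = x) : ∃ y : M, Nrm G • y = x := by
  obtain ⟨s, hs⟩ := Module.projective_def.mp hM
  have hinv : ∀ (g : G) (i : M), MonoidAlgebra.of ℤ G g * s x i = s x i := by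
    intro g i
    have h0 := s.map_smul (MonoidAlgebra.of ℤ G g) x
    rw [hx g] at h0
    exact (Finsupp.ext_iff.mp h0 i).symm
  refine ⟨(s x).sum fun i r => (r.coeff 1) • i, ?_⟩
  have hx' : Finsupp.linearCombination (MonoidAlgebra ℤ G) id (s x) = x := hs x
  rw [Finsupp.linearCombination_apply] at hx'
  simp only [id_eq] at hx'
  rw [Finsupp.smul_sum]
  calc ((s x).sum fun i r => Nrm G • ((r.coeff 1) • i))
      = (s x).sum fun i r => r • i := by
        apply Finsupp.sum_congr
        intro i _
        rw [smul_comm, ← smul_assoc]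
        exact congrArg (· • i) (eq_smul_Nrm_of_invariant G (s x i) (fun g => hinv g i)).symm
    _ = x := hx'

lemma mem_aug_of_Nrm_smul (hM : Module.Projective (MonoidAlgebra ℤ G) M)
    (x : M) (hx : Nrm G • x = 0) : x ∈ augSubgroup G M := by
  obtain ⟨s, hs⟩ := Module.projective_def.mp hM
  have haug : ∀ i : M, augmentation G (s x i) = 0 := by
    intro i
    apply aug_eq_zero_of_Nrm_mul
    have h0 := s.map_smul (Nrm G) x
    rw [hx, map_zero] at h0
    exact (Finsupp.ext_iff.mp h0 i).symm
  have hx' : Finsupp.linearCombination (MonoidAlgebra ℤ G) id (s x) = x := hs x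
  rw [Finsupp.linearCombination_apply] at hx'
  simp only [id_eq] at hx'
  rw [← hx']
  exact AddSubgroup.sum_mem _ fun i _ => smul_mem_aug G (haug i) i

end ModAux

/-- let `G` be a finite group, `P_* → ℤ` a projective resolution of the
trivial `ℤ[G]`-module `ℤ`, and `n = m+1 ≥ 1`.  The group `Hom_{ℤ[G]}(ℤ, Ω^{n+1}ℤ)`
(where `Ω^{n+1}ℤ = ker(d_n : P_n → P_{n-1})`) is identified with the group `K` of
`G`-invariant cycles `x ∈ P_n` (via `f ↦ f(1)`).  `H_n(G,ℤ)`, the homology of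
`P ⊗_{ℤ[G]} ℤ`, is presented as the subquotient `Z/B` of `P_n`, where
`Z = {y | d_n y ∈ aug}` and `B = im(d_{n+1}) + aug`.  The map
`Φ : K → H_n(G,ℤ)`, `Φ(N • y) = [y ⊗ 1]` (with `N = ∑_{g∈G} g` the norm element), is a
well-defined surjective homomorphism, and `Φ(x) = 0` iff the corresponding
homomorphism `f : ℤ → Ω^{n+1}ℤ`, `f(1) = x`, factors through a projective
`ℤ[G]`-module; hence `Φ` induces `Hom-bar_{ℤ[G]}(ℤ, Ω^{n+1}ℤ) ≅ H_n(G,ℤ)`. -/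
theorem stmt9 [Fintype G]
    (P : ℕ → Type) [∀ k, AddCommGroup (P k)] [∀ k, Module (MonoidAlgebra ℤ G) (P k)]
    (d : ∀ k, P (k + 1) →ₗ[MonoidAlgebra ℤ G] P k)
    (ε : P 0 →ₗ[MonoidAlgebra ℤ G] ℤ)
    (hproj : ∀ k, Module.Projective (MonoidAlgebra ℤ G) (P k))
    (hsurj : Function.Surjective ε)
    (h0 : LinearMap.ker ε = LinearMap.range (d 0))
    (hexact : ∀ k, LinearMap.ker (d k) = LinearMap.range (d (k + 1)))
    (m : ℕ) :
    -- the group of invariant cycles in `P (m+1)`, i.e. `Hom_{ℤ[G]}(ℤ, Ω^{m+2}ℤ)`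
    let K : AddSubgroup (P (m + 1)) :=
      invSubgroup G (P (m + 1)) ⊓ (LinearMap.ker (d m)).toAddSubgroup
    -- cycles of `P ⊗_{ℤ[G]} ℤ` in degree `m+1`, presented inside `P (m+1)`
    let Z : AddSubgroup (P (m + 1)) :=
      AddSubgroup.comap (d m).toAddMonoidHom (augSubgroup G (P m))
    -- boundaries (together with the augmentation subgroup)
    let B : AddSubgroup (P (m + 1)) :=
      AddSubgroup.map (d (m + 1)).toAddMonoidHom ⊤ ⊔ augSubgroup G (P (m + 1))
    -- `H_{m+1}(G,ℤ)` as the subquotient `Z / B`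
    ∃ Φ : K →+ Z ⧸ B.addSubgroupOf Z,
      (∀ (y : P (m + 1)) (hy : y ∈ Z)
          (hN : (∑ g : G, MonoidAlgebra.of ℤ G g) • y ∈ K),
          Φ ⟨(∑ g : G, MonoidAlgebra.of ℤ G g) • y, hN⟩
            = QuotientAddGroup.mk (⟨y, hy⟩ : Z)) ∧
      Function.Surjective Φ ∧
      (∀ x : K, Φ x = 0 ↔
        ∃ f : ℤ →ₗ[MonoidAlgebra ℤ G] LinearMap.ker (d m),
          (f 1 : P (m + 1)) = (x : P (m + 1)) ∧ FactorsThroughProjective G f) := by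
  intro K Z B
  classical
  -- existence of a "norm preimage" for every invariant cycle
  have key : ∀ x : P (m + 1), x ∈ K → ∃ y, y ∈ Z ∧ Nrm G • y = x := by
    intro x hx
    rw [AddSubgroup.mem_inf] at hx
    obtain ⟨y, hy⟩ := exists_Nrm_smul G (hproj (m + 1)) x hx.1
    refine ⟨y, ?_, hy⟩
    show d m y ∈ augSubgroup G (P m)
    apply mem_aug_of_Nrm_smul G (hproj m)
    have hker : d m x = 0 := by
      have := hx.2
      rwa [Submodule.mem_toAddSubgroup, LinearMap.mem_ker] at this
    have : d m (Nrm G • y) = 0 := by rw [hy]; exact hker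
    rwa [map_smul] at this
  -- well-definedness
  have welldef : ∀ (a b : P (m + 1)) (ha : a ∈ Z) (hb : b ∈ Z), Nrm G • a = Nrm G • b →
      (QuotientAddGroup.mk ⟨a, ha⟩ : Z ⧸ B.addSubgroupOf Z) = QuotientAddGroup.mk ⟨b, hb⟩ := by
    intro a b ha hb hab
    apply QuotientAddGroup.eq.mpr
    rw [AddSubgroup.mem_addSubgroupOf]
    show (-a + b : P (m + 1)) ∈ B
    apply AddSubgroup.mem_sup_right
    apply mem_aug_of_Nrm_smul G (hproj (m + 1))
    rw [smul_add, smul_neg, hab, neg_add_cancel]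
  choose y₀ hy₀Z hy₀N using key
  let Φ₀ : K → Z ⧸ B.addSubgroupOf Z :=
    fun x => QuotientAddGroup.mk ⟨y₀ x.1 x.2, hy₀Z x.1 x.2⟩
  have Φ₀add : ∀ a b : K, Φ₀ (a + b) = Φ₀ a + Φ₀ b := by
    intro a b
    show QuotientAddGroup.mk _ = QuotientAddGroup.mk _ + QuotientAddGroup.mk _
    rw [← QuotientAddGroup.mk_add]
    apply welldef
    rw [hy₀N, smul_add, hy₀N, hy₀N]
    rfl
  refine ⟨AddMonoidHom.mk' Φ₀ Φ₀add, ?_, ?_, ?_⟩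
  · intro y hy hN
    exact welldef _ _ _ _ (hy₀N _ _)
  · intro q
    induction q using QuotientAddGroup.induction_on with
    | H z =>
      obtain ⟨z, hz⟩ := z
      have hz' : d m z ∈ augSubgroup G (P m) := hz
      have hzK : Nrm G • z ∈ K := by
        rw [AddSubgroup.mem_inf]
        refine ⟨fun g => of_smul_Nrm_smul G g z, ?_⟩
        rw [Submodule.mem_toAddSubgroup, LinearMap.mem_ker, map_smul]
        exact Nrm_smul_aug G hz'
      exact ⟨⟨Nrm G • z, hzK⟩, welldef _ _ _ _ (hy₀N _ _)⟩
  · intro x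
    constructor
    · intro hx0
      have hyB : y₀ x.1 x.2 ∈ B := by
        have h0 : (QuotientAddGroup.mk ⟨y₀ x.1 x.2, hy₀Z x.1 x.2⟩ :
            Z ⧸ B.addSubgroupOf Z) = 0 := hx0
        rw [QuotientAddGroup.eq_zero_iff, AddSubgroup.mem_addSubgroupOf] at h0
        exact h0
      rw [AddSubgroup.mem_sup] at hyB
      obtain ⟨p, hp, a, ha, hpa⟩ := hyB
      rw [AddSubgroup.mem_map] at hp
      obtain ⟨w, -, hw⟩ := hp
      have hw' : d (m + 1) w = p := hw
      have hrv : ∀ r : MonoidAlgebra ℤ G,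
          r • (Nrm G • w) = (augmentation G r) • (Nrm G • w) := by
        intro r
        rw [← mul_smul, mul_Nrm, smul_assoc]
      let f₁ : ℤ →ₗ[MonoidAlgebra ℤ G] P (m + 2) :=
        { toFun := fun k => k • (Nrm G • w)
          map_add' := fun k l => add_smul k l _
          map_smul' := fun r k => by
            show (r • k : ℤ) • (Nrm G • w) = r • (k • (Nrm G • w))
            rw [triv_smul, mul_smul, ← smul_comm k r, hrv, smul_comm] }
      have hd2 : ∀ p : P (m + 2), d (m + 1) p ∈ LinearMap.ker (d m) := by
        intro p
        rw [hexact m]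
        exact ⟨p, rfl⟩
      let f₂ : P (m + 2) →ₗ[MonoidAlgebra ℤ G] LinearMap.ker (d m) :=
        (d (m + 1)).codRestrict (LinearMap.ker (d m)) hd2
      refine ⟨f₂.comp f₁, ?_, P (m + 2), inferInstance, inferInstance,
        hproj (m + 2), f₁, f₂, rfl⟩
      show ((f₂ (f₁ 1) : LinearMap.ker (d m)) : P (m + 1)) = (x : P (m + 1))
      have h1 : f₁ (1 : ℤ) = Nrm G • w := one_smul ℤ _
      rw [h1]
      show d (m + 1) (Nrm G • w) = (x : P (m + 1))
      rw [map_smul, hw']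
      have hNa : Nrm G • a = 0 := Nrm_smul_aug G ha
      calc Nrm G • p = Nrm G • (p + a) := by rw [smul_add, hNa, add_zero]
        _ = (x : P (m + 1)) := by rw [hpa, hy₀N]
    · rintro ⟨f, hf1, Q, _, _, hQproj, f₁, f₂, hfact⟩
      have hinv1 : ∀ g : G, MonoidAlgebra.of ℤ G g • f₁ (1 : ℤ) = f₁ 1 := by
        intro g
        rw [← f₁.map_smul]
        congr 1
        show MonoidAlgebra.of ℤ G g • (1 : ℤ) = 1
        rw [triv_smul, aug_of, one_mul]
      obtain ⟨q, hq⟩ := exists_Nrm_smul G hQproj (f₁ 1) hinv1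
      have hy'ker : d m ((f₂ q : LinearMap.ker (d m)) : P (m + 1)) = 0 :=
        LinearMap.mem_ker.mp (f₂ q).2
      have hy'Z : ((f₂ q : LinearMap.ker (d m)) : P (m + 1)) ∈ Z := by
        show d m ((f₂ q : LinearMap.ker (d m)) : P (m + 1)) ∈ augSubgroup G (P m)
        rw [hy'ker]
        exact zero_mem _
      have hxN : (x : P (m + 1)) = Nrm G • ((f₂ q : LinearMap.ker (d m)) : P (m + 1)) := by
        rw [← hf1, hfact]
        show ((f₂ (f₁ 1) : LinearMap.ker (d m)) : P (m + 1)) = _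
        rw [← hq, map_smul]
        rfl
      have h1 : (AddMonoidHom.mk' Φ₀ Φ₀add) x =
          QuotientAddGroup.mk ⟨((f₂ q : LinearMap.ker (d m)) : P (m + 1)), hy'Z⟩ :=
        welldef _ _ _ _ (by rw [hy₀N, hxN])
      rw [h1, QuotientAddGroup.eq_zero_iff, AddSubgroup.mem_addSubgroupOf]
      apply AddSubgroup.mem_sup_left
      rw [AddSubgroup.mem_map]
      have hrange : ((f₂ q : LinearMap.ker (d m)) : P (m + 1)) ∈
          LinearMap.range (d (m + 1)) := by
        rw [← hexact m]
        exact (f₂ q).2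
      obtain ⟨v, hv⟩ := hrange
      exact ⟨v, trivial, hv⟩
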